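/- Fix an integer M ≥ 1 and γ > 0. There exists a nonzero constant C, depending only on M and γ (but not on the points x_1, …, x_M), such that for all nonzero real numbers x_1, …, x_M one has det[ f_M^{(i-1)}(x_j) ]_{i,j=1}^{M} = C · det[ x_j^{i-1} · f_{M-i+1}(x_j) ]_{i,j=1}^{M}, where f_M^{(m)} denotes the m-th derivative of f_M. -/

import Mathlib

open Finset

/-- For an integer `M ≥ 1` and real `γ > 0`, the function
`f_M(x) = (π/(γ^{2M-1} 2^{M-1} (M-1)!)) · e^{-γ|x|} ·
  ∑_{l=0}^{M-1} ((M-1+l)!/(l!(M-1-l)! 2^l)) |γx|^{M-1-l}`. -/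
noncomputable def fM (γ : ℝ) (M : ℕ) (x : ℝ) : ℝ :=
  Real.pi / (γ ^ (2 * M - 1) * 2 ^ (M - 1) * (Nat.factorial (M - 1))) *
    Real.exp (-γ * |x|) *
    ∑ l ∈ Finset.range M,
      ((Nat.factorial (M - 1 + l) : ℝ) /
        ((Nat.factorial l : ℝ) * (Nat.factorial (M - 1 - l) : ℝ) * 2 ^ l)) *
      |γ * x| ^ (M - 1 - l)



/-- Bessel-type coefficient, extended by zero. -/
noncomputable def bc (n l : ℕ) : ℝ :=
  if l ≤ n then (Nat.factorial (n + l) : ℝ) /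
    ((Nat.factorial l : ℝ) * (Nat.factorial (n - l) : ℝ) * 2 ^ l) else 0

lemma bc_of_le {n l : ℕ} (h : l ≤ n) : bc n l = (Nat.factorial (n + l) : ℝ) /
    ((Nat.factorial l : ℝ) * (Nat.factorial (n - l) : ℝ) * 2 ^ l) := if_pos h

lemma bc_zero (n : ℕ) : bc n 0 = 1 := by
  rw [bc_of_le (Nat.zero_le n)]
  have : (0:ℝ) < (Nat.factorial n : ℝ) := by positivity
  simp [Nat.factorial, div_self this.ne']

lemma bc_pos {n l : ℕ} (h : l ≤ n) : 0 < bc n l := by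
  rw [bc_of_le h]; positivity

lemma bc_eq_zero {n l : ℕ} (h : n < l) : bc n l = 0 := by
  rw [bc, if_neg (by omega)]

/-- key identity I1 : `a(n+1,k+1) = a(n,k+1) + (n+1-k) a(n+1,k)` for `k ≤ n`. -/
lemma bc_I1 {n k : ℕ} (h : k ≤ n) :
    bc (n+1) (k+1) = bc n (k+1) + ((n + 1 - k : ℕ) : ℝ) * bc (n+1) k := by
  rcases eq_or_lt_of_le h with rfl | hk
  · -- n = k
    rw [bc_eq_zero (n := k) (l := k+1) (by omega),
      bc_of_le (n := k+1) (l := k+1) le_rfl,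
      bc_of_le (n := k+1) (l := k) (by omega)]
    rw [show k + 1 + (k+1) = (2*k+1)+1 by omega, show k + 1 + k = 2*k+1 by omega,
      show k+1-(k+1) = 0 by omega, show k+1-k = 1 by omega]
    have h2 : (0:ℝ) < 2 ^ k := by positivity
    have hf : (0:ℝ) < (Nat.factorial k : ℝ) := by positivity
    have hf2 : (0:ℝ) < (Nat.factorial (2*k+1) : ℝ) := by positivity
    push_cast [Nat.factorial_succ, pow_succ, Nat.factorial]
    field_simp
    ring
  · -- k < n, write n = k + 1 + d
    obtain ⟨d, rfl⟩ : ∃ d, n = k + 1 + d := ⟨n - (k+1), by omega⟩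
    rw [bc_of_le (n := k+1+d+1) (l := k+1) (by omega),
      bc_of_le (n := k+1+d) (l := k+1) (by omega),
      bc_of_le (n := k+1+d+1) (l := k) (by omega)]
    rw [show k + 1 + d + 1 + (k + 1) = (2*k+d+2)+1 by omega,
      show k + 1 + d + 1 - (k + 1) = d + 1 by omega,
      show k + 1 + d + (k + 1) = 2*k+d+2 by omega,
      show k + 1 + d - (k + 1) = d by omega,
      show k + 1 + d + 1 + k = 2*k+d+2 by omega,
      show k + 1 + d + 1 - k = (d+1)+1 by omega]
    have h2 : (0:ℝ) < 2 ^ k := by positivity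
    have hfk : (0:ℝ) < (Nat.factorial k : ℝ) := by positivity
    have hfd : (0:ℝ) < (Nat.factorial d : ℝ) := by positivity
    have hfF : (0:ℝ) < (Nat.factorial (2*k+d+2) : ℝ) := by positivity
    push_cast [Nat.factorial_succ, pow_succ]
    field_simp
    ring

/-- key identity I2 : `a(n+2,i+1) = (2n+3) a(n+1,i) + a(n,i+1)` for `i ≤ n+1`. -/
lemma bc_I2 {n i : ℕ} (h : i ≤ n + 1) :
    bc (n+2) (i+1) = (2*(n:ℝ)+3) * bc (n+1) i + bc n (i+1) := by
  rcases eq_or_lt_of_le h with he | hlt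
  · -- i = n+1
    subst he
    rw [bc_eq_zero (n := n) (l := n+1+1) (by omega),
      bc_of_le (n := n+2) (l := n+1+1) (by omega),
      bc_of_le (n := n+1) (l := n+1) le_rfl]
    rw [show n + 2 + (n + 1 + 1) = ((2*n+2)+1)+1 by omega,
      show n + 2 - (n + 1 + 1) = 0 by omega,
      show n + 1 + (n + 1) = (2*n+1)+1 by omega,
      show n + 1 - (n + 1) = 0 by omega,
      show (2*n+2) = (2*n+1)+1 by omega]
    have h2 : (0:ℝ) < 2 ^ (n+1) := by positivity
    have hf : (0:ℝ) < (Nat.factorial (n+1) : ℝ) := by positivity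
    have hf2 : (0:ℝ) < (Nat.factorial (2*n+1) : ℝ) := by positivity
    push_cast [Nat.factorial_succ, pow_succ, Nat.factorial]
    field_simp
    ring
  rcases eq_or_lt_of_le (by omega : i ≤ n) with he | hlt2
  · -- i = n
    subst he
    rw [bc_eq_zero (n := i) (l := i+1) (by omega),
      bc_of_le (n := i+2) (l := i+1) (by omega),
      bc_of_le (n := i+1) (l := i) (by omega)]
    rw [show i + 2 + (i + 1) = ((2*i+1)+1)+1 by omega,
      show i + 2 - (i + 1) = 1 by omega,
      show i + 1 + i = (2*i)+1 by omega,
      show i + 1 - i = 1 by omega,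
      show (2*i+1) = (2*i)+1 by omega]
    have h2 : (0:ℝ) < 2 ^ i := by positivity
    have hf : (0:ℝ) < (Nat.factorial i : ℝ) := by positivity
    have hf2 : (0:ℝ) < (Nat.factorial (2*i) : ℝ) := by positivity
    push_cast [Nat.factorial_succ, pow_succ, Nat.factorial]
    field_simp
    ring
  · -- i < n : n = i + 1 + d
    obtain ⟨d, rfl⟩ : ∃ d, n = i + 1 + d := ⟨n - (i+1), by omega⟩
    rw [bc_of_le (n := i+1+d+2) (l := i+1) (by omega),
      bc_of_le (n := i+1+d+1) (l := i) (by omega),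
      bc_of_le (n := i+1+d) (l := i+1) (by omega)]
    rw [show i + 1 + d + 2 + (i + 1) = ((2*i+d+2)+1)+1 by omega,
      show i + 1 + d + 2 - (i + 1) = (d+1)+1 by omega,
      show i + 1 + d + 1 + i = (2*i+d+1)+1 by omega,
      show i + 1 + d + 1 - i = ((d+1)+1) by omega,
      show i + 1 + d + (i + 1) = (2*i+d+1)+1 by omega,
      show i + 1 + d - (i + 1) = d by omega,
      show (2*i+d+2) = (2*i+d+1)+1 by omega]
    have h2 : (0:ℝ) < 2 ^ i := by positivity
    have hfi : (0:ℝ) < (Nat.factorial i : ℝ) := by positivity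
    have hfd : (0:ℝ) < (Nat.factorial d : ℝ) := by positivity
    have hfF : (0:ℝ) < (Nat.factorial (2*i+d+1) : ℝ) := by positivity
    push_cast [Nat.factorial_succ, pow_succ]
    field_simp
    ring


noncomputable def θf (n : ℕ) (t : ℝ) : ℝ := ∑ l ∈ Finset.range (n+1), bc n l * t ^ (n - l)

lemma theta_rec (n : ℕ) (t : ℝ) :
    θf (n+2) t = (2*(n:ℝ)+3) * θf (n+1) t + t^2 * θf n t := by
  unfold θf
  rw [Finset.sum_range_succ' (fun k => bc (n+2) k * t ^ (n+2-k)) (n+2),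
    Finset.mul_sum, Finset.mul_sum]
  have h2 : ∀ l ∈ Finset.range (n+1), t^2 * (bc n l * t ^ (n-l)) = bc n l * t ^ (n+2-l) := by
    intro l hl; rw [mem_range] at hl
    rw [show n+2-l = (n-l)+2 by omega]; ring
  rw [Finset.sum_congr rfl h2,
    Finset.sum_range_succ' (fun l => bc n l * t ^ (n+2-l)) n]
  have h3 : ∑ l ∈ Finset.range n, bc n (l+1) * t ^ (n+2-(l+1))
      = ∑ l ∈ Finset.range (n+2), bc n (l+1) * t ^ (n+2-(l+1)) := by
    apply Finset.sum_subset (Finset.range_subset_range.2 (by omega))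
    intro l _ hl; rw [mem_range] at hl
    rw [bc_eq_zero (by omega), zero_mul]
  rw [h3]
  have key : ∀ l ∈ Finset.range (n+2),
      bc (n+2) (l+1) * t ^ (n+2-(l+1))
        = (2*(n:ℝ)+3) * (bc (n+1) l * t ^ (n+1-l)) + bc n (l+1) * t ^ (n+2-(l+1)) := by
    intro l hl; rw [mem_range] at hl
    rw [bc_I2 (by omega), show n+2-(l+1) = n+1-l by omega]; ring
  rw [Finset.sum_congr rfl key, Finset.sum_add_distrib]
  rw [bc_zero, bc_zero]
  ring

lemma theta_hasDerivAt (n : ℕ) (t : ℝ) :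
    HasDerivAt (θf (n+1)) (θf (n+1) t - t * θf n t) t := by
  have h : HasDerivAt (θf (n+1))
      (∑ l ∈ Finset.range (n+2), bc (n+1) l * (((n+1-l : ℕ) : ℝ) * t ^ (n+1-l-1))) t := by
    apply HasDerivAt.fun_sum
    intro l _
    exact (hasDerivAt_pow (n+1-l) t).const_mul (bc (n+1) l)
  convert h using 1
  rw [Finset.sum_range_succ (fun l => bc (n+1) l * (((n+1-l : ℕ) : ℝ) * t ^ (n+1-l-1))) (n+1)]
  simp only [Nat.sub_self, Nat.cast_zero, zero_mul, mul_zero, add_zero]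
  unfold θf
  rw [Finset.sum_range_succ' (fun l => bc (n+1) l * t ^ (n+1-l)) (n+1), Finset.mul_sum]
  have h2 : ∀ l ∈ Finset.range (n+1), t * (bc n l * t ^ (n-l)) = bc n l * t ^ (n+1-l) := by
    intro l hl; rw [mem_range] at hl
    rw [show n+1-l = (n-l)+1 by omega]; ring
  rw [Finset.sum_congr rfl h2, Finset.sum_range_succ' (fun l => bc n l * t ^ (n+1-l)) n]
  have h3 : ∑ l ∈ Finset.range n, bc n (l+1) * t ^ (n+1-(l+1))
      = ∑ l ∈ Finset.range (n+1), bc n (l+1) * t ^ (n+1-(l+1)) := by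
    apply Finset.sum_subset (Finset.range_subset_range.2 (by omega))
    intro l _ hl; rw [mem_range] at hl
    rw [bc_eq_zero (by omega), zero_mul]
  rw [h3, bc_zero, bc_zero]
  have key : ∀ l ∈ Finset.range (n+1),
      bc (n+1) l * (((n+1-l : ℕ) : ℝ) * t ^ (n+1-l-1))
        = bc (n+1) (l+1) * t ^ (n+1-(l+1)) - bc n (l+1) * t ^ (n+1-(l+1)) := by
    intro l hl; rw [mem_range] at hl
    rw [bc_I1 (by omega), show n+1-l-1 = n+1-(l+1) by omega]
    ring
  rw [Finset.sum_congr rfl key, Finset.sum_sub_distrib]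
  ring


noncomputable def cst (γ : ℝ) (M : ℕ) : ℝ :=
  Real.pi / (γ ^ (2 * M - 1) * 2 ^ (M - 1) * (Nat.factorial (M - 1)))

lemma fM_eq {γ : ℝ} (hγ : 0 < γ) (n : ℕ) (x : ℝ) :
    fM γ (n+1) x = cst γ (n+1) * Real.exp (-γ * |x|) * θf n (γ * |x|) := by
  unfold fM cst θf
  simp only [Nat.add_sub_cancel]
  congr 1
  apply Finset.sum_congr rfl
  intro l hl; rw [mem_range] at hl
  rw [bc_of_le (by omega), abs_mul, abs_of_pos hγ]

lemma cst_succ {γ : ℝ} (hγ : 0 < γ) (n : ℕ) :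
    cst γ (n+1) = cst γ (n+2) * (2*((n:ℝ)+1)*γ^2) := by
  unfold cst
  rw [show 2*(n+2)-1 = (2*(n+1)-1)+2 by omega, show (n+2)-1 = ((n+1)-1)+1 by omega]
  have h1 : γ ≠ 0 := hγ.ne'
  have h2 : (0:ℝ) < 2 ^ (n+1-1) := by positivity
  have h3 : (0:ℝ) < (Nat.factorial (n+1-1) : ℝ) := by positivity
  rw [show (n+1) - 1 = n from rfl]
  push_cast [Nat.factorial_succ, pow_succ]
  field_simp

/-- derivative: `(f_{n+2})'(x) = -(x/(2(n+1))) f_{n+1}(x)` for `x ≠ 0`. -/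
lemma fM_hasDerivAt {γ : ℝ} (hγ : 0 < γ) (n : ℕ) {x : ℝ} (hx : x ≠ 0) :
    HasDerivAt (fM γ (n+2)) (-(x/(2*((n:ℝ)+1))) * fM γ (n+1) x) x := by
  rcases hx.lt_or_gt with hneg | hpos
  · -- x < 0
    have hev : fM γ (n+2) =ᶠ[nhds x] fun y =>
        cst γ (n+2) * Real.exp (γ * y) * θf (n+1) (-(γ * y)) := by
      filter_upwards [IsOpen.mem_nhds isOpen_Iio hneg] with y hy
      rw [fM_eq hγ (n+1) y, abs_of_neg hy]
      ring_nf
    have hθ := theta_hasDerivAt n (-(γ * x))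
    have h1 : HasDerivAt (fun y : ℝ => -(γ * y)) (-γ) x := by
      simpa using ((hasDerivAt_id x).const_mul γ).fun_neg
    have h2 : HasDerivAt (fun y : ℝ => θf (n+1) (-(γ * y)))
        ((θf (n+1) (-(γ*x)) - (-(γ*x)) * θf n (-(γ*x))) * (-γ)) x := hθ.comp x h1 (h₂ := θf (n+1))
    have h3 : HasDerivAt (fun y : ℝ => Real.exp (γ * y)) (Real.exp (γ * x) * γ) x := by
      simpa [mul_comm, Function.comp_def] using (Real.hasDerivAt_exp (γ*x)).comp x ((hasDerivAt_id x).const_mul γ)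
    have h4 : HasDerivAt (fun y => cst γ (n+2) * Real.exp (γ * y) * θf (n+1) (-(γ * y)))
        (cst γ (n+2) * Real.exp (γ * x) * γ * θf (n+1) (-(γ*x))
          + cst γ (n+2) * Real.exp (γ * x) *
            ((θf (n+1) (-(γ*x)) - (-(γ*x)) * θf n (-(γ*x))) * (-γ))) x := by
      simpa [mul_assoc, mul_comm, mul_left_comm] using ((h3.const_mul (cst γ (n+2))).fun_mul h2)
    have := h4.congr_of_eventuallyEq hev
    refine this.congr_deriv ?_
    rw [fM_eq hγ n x, abs_of_neg hneg, cst_succ hγ n]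
    have hne : (2*((n:ℝ)+1)) ≠ 0 := by positivity
    field_simp
    ring
  · -- x > 0
    have hev : fM γ (n+2) =ᶠ[nhds x] fun y =>
        cst γ (n+2) * Real.exp (-(γ * y)) * θf (n+1) (γ * y) := by
      filter_upwards [IsOpen.mem_nhds isOpen_Ioi hpos] with y hy
      rw [fM_eq hγ (n+1) y, abs_of_pos hy]
      ring_nf
    have hθ := theta_hasDerivAt n (γ * x)
    have h1 : HasDerivAt (fun y : ℝ => γ * y) γ x := by
      simpa using (hasDerivAt_id x).const_mul γ
    have h2 : HasDerivAt (fun y : ℝ => θf (n+1) (γ * y))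
        ((θf (n+1) (γ*x) - (γ*x) * θf n (γ*x)) * γ) x := hθ.comp x h1
    have h3 : HasDerivAt (fun y : ℝ => Real.exp (-(γ * y))) (Real.exp (-(γ * x)) * (-γ)) x := by
      simpa [mul_comm, Function.comp_def] using (Real.hasDerivAt_exp (-(γ*x))).comp x
        (((hasDerivAt_id x).const_mul γ).fun_neg)
    have h4 : HasDerivAt (fun y => cst γ (n+2) * Real.exp (-(γ * y)) * θf (n+1) (γ * y))
        (cst γ (n+2) * Real.exp (-(γ * x)) * (-γ) * θf (n+1) (γ*x)
          + cst γ (n+2) * Real.exp (-(γ * x)) *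
            ((θf (n+1) (γ*x) - (γ*x) * θf n (γ*x)) * γ)) x := by
      simpa [mul_assoc, mul_comm, mul_left_comm] using ((h3.const_mul (cst γ (n+2))).fun_mul h2)
    have := h4.congr_of_eventuallyEq hev
    refine this.congr_deriv ?_
    rw [fM_eq hγ n x, abs_of_pos hpos, cst_succ hγ n]
    have hne : (2*((n:ℝ)+1)) ≠ 0 := by positivity
    field_simp
    ring

/-- three-term recurrence for `fM`. -/
lemma fM_rec {γ : ℝ} (hγ : 0 < γ) (n : ℕ) (x : ℝ) :
    fM γ (n+2) x = (2*((n:ℝ)+2))*γ^2/(2*(n:ℝ)+3) * fM γ (n+3) x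
      - x^2/((2*(n:ℝ)+3)*(2*((n:ℝ)+1))) * fM γ (n+1) x := by
  have h := theta_rec n (γ * |x|)
  rw [fM_eq hγ (n+2) x, fM_eq hγ (n+1) x, fM_eq hγ n x, h]
  rw [cst_succ hγ (n+1), cst_succ hγ n, cst_succ hγ (n+1)]
  have hx2 : (γ * |x|)^2 = γ^2 * x^2 := by
    rw [mul_pow, sq_abs]
  rw [hx2]
  have c1 : (2*(n:ℝ)+3) ≠ 0 := by positivity
  have c2 : (2*((n:ℝ)+1)) ≠ 0 := by positivity
  field_simp
  push_cast
  ring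


/-- "down" coefficient. -/
noncomputable def Tc (γ : ℝ) (M : ℕ) (j : ℕ) : ℝ :=
  (j:ℝ) * (2*((M:ℝ)-(j:ℝ))*γ^2 / (2*((M:ℝ)-(j:ℝ))-1))

/-- "up" coefficient. -/
noncomputable def Sc (M : ℕ) (j : ℕ) : ℝ :=
  -(j:ℝ)/((2*((M:ℝ)-(j:ℝ))-1)*(2*((M:ℝ)-(j:ℝ))-2)) - 1/(2*((M:ℝ)-(j:ℝ))-2)

lemma Sc_neg {M j : ℕ} (h : j + 2 ≤ M) : Sc M j < 0 := by
  have h1 : (0:ℝ) < 2*((M:ℝ)-(j:ℝ))-1 := by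
    have : (j:ℝ) + 2 ≤ (M:ℝ) := by exact_mod_cast h
    linarith
  have h2 : (0:ℝ) < 2*((M:ℝ)-(j:ℝ))-2 := by
    have : (j:ℝ) + 2 ≤ (M:ℝ) := by exact_mod_cast h
    linarith
  have h3 : (0:ℝ) ≤ (j:ℝ) := Nat.cast_nonneg j
  unfold Sc
  have := div_pos h1 h2  -- dummy
  have hA : -(j:ℝ)/((2*((M:ℝ)-(j:ℝ))-1)*(2*((M:ℝ)-(j:ℝ))-2)) ≤ 0 := by
    apply div_nonpos_of_nonpos_of_nonneg (by linarith) (by positivity)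
  have hB : 0 < 1/(2*((M:ℝ)-(j:ℝ))-2) := by positivity
  linarith

/-- derivative of the basis function `y^j * fM γ (M-j) y` for `j + 2 ≤ M`, `x ≠ 0`. -/
lemma basis_hasDerivAt {γ : ℝ} (hγ : 0 < γ) {M j : ℕ} (hj : j + 2 ≤ M) {x : ℝ} (hx : x ≠ 0) :
    HasDerivAt (fun y => y^j * fM γ (M-j) y)
      (Tc γ M j * (x^(j-1) * fM γ (M-(j-1)) x)
        + Sc M j * (x^(j+1) * fM γ (M-(j+1)) x)) x := by
  obtain ⟨k, rfl⟩ : ∃ k, M = j + (k + 2) := ⟨M - j - 2, by omega⟩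
  rw [show j + (k+2) - j = k + 2 by omega]
  have hD : HasDerivAt (fun y => y^j * fM γ (k+2) y)
      ((j:ℝ) * x^(j-1) * fM γ (k+2) x + x^j * (-(x/(2*((k:ℝ)+1))) * fM γ (k+1) x)) x :=
    (hasDerivAt_pow j x).mul (fM_hasDerivAt hγ k hx)
  convert hD using 1
  rw [fM_rec hγ k x]
  rw [show j + (k+2) - (j+1) = k + 1 by omega]
  have hMc : ((j + (k+2) : ℕ) : ℝ) = (j:ℝ) + (k:ℝ) + 2 := by push_cast; ring
  unfold Tc Sc
  rw [hMc]
  have e1 : 2*(((j:ℝ)+(k:ℝ)+2)-(j:ℝ)) - 1 = 2*(k:ℝ)+3 := by ring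
  have e2 : 2*(((j:ℝ)+(k:ℝ)+2)-(j:ℝ)) - 2 = 2*((k:ℝ)+1) := by ring
  have e3 : 2*(((j:ℝ)+(k:ℝ)+2)-(j:ℝ)) = 2*((k:ℝ)+2) := by ring
  rw [e1, e2, e3]
  have c1 : (2*(k:ℝ)+3) ≠ 0 := by positivity
  have c2 : (2*((k:ℝ)+1)) ≠ 0 := by positivity
  rcases Nat.eq_zero_or_pos j with rfl | hj1
  · -- j = 0
    rw [show (0:ℕ)+(k+2)-(0-1) = k+2 by omega]
    push_cast
    field_simp
    ring
  · obtain ⟨i, rfl⟩ : ∃ i, j = i + 1 := ⟨j - 1, by omega⟩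
    rw [show i+1+(k+2)-(i+1-1) = k+3 by omega, show i+1-1 = i from rfl]
    have hxp : x^(i+1) = x^i * x := pow_succ x i
    push_cast
    field_simp
    ring

noncomputable def Lc (γ : ℝ) (M : ℕ) : ℕ → ℕ → ℝ
  | 0, j => if j = 0 then 1 else 0
  | m+1, j => Tc γ M (j+1) * Lc γ M m (j+1) +
      (if j = 0 then 0 else Sc M (j-1) * Lc γ M m (j-1))

lemma Lc_vanish (γ : ℝ) (M : ℕ) : ∀ m j, m < j → Lc γ M m j = 0 := by
  intro m
  induction m with
  | zero =>
    intro j hj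
    have h0 : j ≠ 0 := by omega
    simp [Lc, h0]
  | succ m ih =>
    intro j hj
    have h1 : Lc γ M m (j+1) = 0 := ih (j+1) (by omega)
    have h2 : j ≠ 0 → Lc γ M m (j-1) = 0 := fun h0 => ih (j-1) (by omega)
    simp only [Lc, h1, mul_zero, zero_add]
    by_cases h0 : j = 0
    · simp [h0]
    · simp [h0, h2 h0]

lemma Lc_diag_ne (γ : ℝ) (M : ℕ) : ∀ m, m + 1 ≤ M → Lc γ M m m ≠ 0 := by
  intro m
  induction m with
  | zero => intro _; simp [Lc]
  | succ m ih =>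
    intro hm
    have hv : Lc γ M m (m+2) = 0 := Lc_vanish γ M m (m+2) (by omega)
    simp only [Lc, hv, mul_zero, zero_add, Nat.succ_ne_zero, if_false,
      Nat.add_sub_cancel]
    exact mul_ne_zero (Sc_neg (by omega : m + 2 ≤ M)).ne (ih (by omega))

lemma master {γ : ℝ} (hγ : 0 < γ) (M : ℕ) :
    ∀ m, m + 1 ≤ M → ∀ x : ℝ, x ≠ 0 →
      iteratedDeriv m (fM γ M) x
        = ∑ j ∈ Finset.range (m+1), Lc γ M m j * (x^j * fM γ (M-j) x) := by
  intro m
  induction m with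
  | zero =>
    intro _ x _
    simp [Lc, iteratedDeriv_zero]
  | succ m ih =>
    intro hm x hx
    have hm' : m + 1 ≤ M := by omega
    -- the locally-equal representation
    set g : ℝ → ℝ := fun y => ∑ j ∈ Finset.range (m+1), Lc γ M m j * (y^j * fM γ (M-j) y)
      with hg
    have hev : iteratedDeriv m (fM γ M) =ᶠ[nhds x] g := by
      filter_upwards [isOpen_compl_singleton.mem_nhds (by simpa using hx :
        x ∈ ({0}ᶜ : Set ℝ))] with y hy
      exact ih hm' y hy
    rw [iteratedDeriv_succ, hev.deriv_eq]
    -- derivative of g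
    have hgd : HasDerivAt g
        (∑ j ∈ Finset.range (m+1), Lc γ M m j *
          (Tc γ M j * (x^(j-1) * fM γ (M-(j-1)) x)
            + Sc M j * (x^(j+1) * fM γ (M-(j+1)) x))) x := by
      apply HasDerivAt.fun_sum
      intro j hj
      rw [mem_range] at hj
      exact (basis_hasDerivAt hγ (by omega : j + 2 ≤ M) hx).const_mul (Lc γ M m j)
    rw [hgd.deriv]
    -- reindex
    have split : ∀ j ∈ Finset.range (m+1), Lc γ M m j *
          (Tc γ M j * (x^(j-1) * fM γ (M-(j-1)) x)
            + Sc M j * (x^(j+1) * fM γ (M-(j+1)) x))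
        = Lc γ M m j * Tc γ M j * (x^(j-1) * fM γ (M-(j-1)) x)
            + Lc γ M m j * Sc M j * (x^(j+1) * fM γ (M-(j+1)) x) := by
      intro j _; ring
    rw [Finset.sum_congr rfl split, Finset.sum_add_distrib]
    -- first sum: over j, contributes to index j-1
    have sum1 : ∑ j ∈ Finset.range (m+1),
          Lc γ M m j * Tc γ M j * (x^(j-1) * fM γ (M-(j-1)) x)
        = ∑ i ∈ Finset.range (m+2),
          Tc γ M (i+1) * Lc γ M m (i+1) * (x^i * fM γ (M-i) x) := by
      rw [Finset.sum_range_succ' (fun j => Lc γ M m j * Tc γ M j * (x^(j-1) * fM γ (M-(j-1)) x)) m]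
      have hT0 : Tc γ M 0 = 0 := by simp [Tc]
      rw [hT0]
      simp only [Nat.add_sub_cancel, mul_zero, zero_mul, add_zero]
      rw [Finset.sum_subset (Finset.range_subset_range.2 (by omega : m ≤ m + 2))]
      · apply Finset.sum_congr rfl
        intro i _; ring
      · intro i _ hi
        rw [mem_range, not_lt] at hi
        rw [Lc_vanish γ M m (i+1) (by omega)]
        ring
    -- second sum: over j, contributes to index j+1
    have sum2 : ∑ j ∈ Finset.range (m+1),
          Lc γ M m j * Sc M j * (x^(j+1) * fM γ (M-(j+1)) x)
        = ∑ i ∈ Finset.range (m+2),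
          (if i = 0 then 0 else Sc M (i-1) * Lc γ M m (i-1)) * (x^i * fM γ (M-i) x) := by
      rw [Finset.sum_range_succ'
        (fun i => (if i = 0 then 0 else Sc M (i-1) * Lc γ M m (i-1)) * (x^i * fM γ (M-i) x)) (m+1)]
      simp only [Nat.succ_ne_zero, if_false, Nat.add_sub_cancel, eq_self_iff_true,
        if_true, zero_mul, add_zero]
      apply Finset.sum_congr rfl
      intro j _; ring
    rw [sum1, sum2, ← Finset.sum_add_distrib]
    apply Finset.sum_congr rfl
    intro i _
    show _ = Lc γ M (m+1) i * (x^i * fM γ (M-i) x)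
    simp only [Lc]
    ring


/-- there is a nonzero constant `C`, depending only on `M` and `γ`, with
`det[ f_M^{(i-1)}(x_j) ] = C · det[ x_j^{i-1} · f_{M-i+1}(x_j) ]`
for all nonzero real `x_1, …, x_M`, where `f_M^{(m)}` is the `m`-th derivative of `f_M`. -/
theorem det_derivs_eq_const_mul_det (M : ℕ) (hM : 1 ≤ M) (γ : ℝ) (hγ : 0 < γ) :
    ∃ C : ℝ, C ≠ 0 ∧ ∀ x : Fin M → ℝ, (∀ j, x j ≠ 0) →
      Matrix.det (Matrix.of fun i j : Fin M => iteratedDeriv (i : ℕ) (fM γ M) (x j))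
        = C * Matrix.det
            (Matrix.of fun i j : Fin M => (x j) ^ (i : ℕ) * fM γ (M - (i : ℕ)) (x j)) := by
  refine ⟨∏ i : Fin M, Lc γ M i i, ?_, ?_⟩
  · exact Finset.prod_ne_zero_iff.2 fun i _ => Lc_diag_ne γ M i (by omega)
  · intro x hx
    set B : Matrix (Fin M) (Fin M) ℝ :=
      Matrix.of fun i j : Fin M => (x j) ^ (i : ℕ) * fM γ (M - (i : ℕ)) (x j) with hB
    set Lm : Matrix (Fin M) (Fin M) ℝ := Matrix.of fun i k : Fin M => Lc γ M i k with hLm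
    have hA : (Matrix.of fun i j : Fin M => iteratedDeriv (i : ℕ) (fM γ M) (x j))
        = Lm * B := by
      ext i j
      rw [Matrix.mul_apply]
      simp only [Matrix.of_apply, hLm, hB]
      rw [master hγ M i (by omega) (x j) (hx j)]
      have h1 : ∑ k ∈ Finset.range ((i:ℕ)+1), Lc γ M i k * ((x j)^k * fM γ (M-k) (x j))
          = ∑ k ∈ Finset.range M, Lc γ M i k * ((x j)^k * fM γ (M-k) (x j)) := by
        apply Finset.sum_subset (Finset.range_subset_range.2 (by omega))
        intro k _ hk
        rw [mem_range, not_lt] at hk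
        rw [Lc_vanish γ M i k (by omega), zero_mul]
      rw [h1, ← Fin.sum_univ_eq_sum_range
        (fun k => Lc γ M i k * ((x j)^k * fM γ (M-k) (x j))) M]
    rw [hA, Matrix.det_mul]
    congr 1
    have htri : Lm.BlockTriangular ⇑OrderDual.toDual := by
      intro i j hij
      exact Lc_vanish γ M i j (by exact_mod_cast hij)
    rw [Matrix.det_of_lowerTriangular Lm htri]
    rfl
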